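/- With notation as follows, fix 1 ≤ c < d ≤ n. Define ψ(B,C) := Σ_{i=1}^{n−1}(BC)_{i,i+1}, let B_{pq} := E_{pq}+E_{qp} if 1 ≤ p < q ≤ n, B_{pp} := E_{pp} if 1 ≤ p ≤ n, and B_{pq} := 0 otherwise; let C_{cd} := E_{cd} − E_{dc}. Then Σ_{k=0}^{n} ψ(B_{c+k, d−k−1}, C_{cd}) = 1. -/

import Mathlib

open Finset Matrix

/-- The elementary matrix `E_{pq}` in 1-based indexing, defined to be `0`
unless `1 ≤ p, q ≤ n`. -/
noncomputable def Eint (n : ℕ) (p q : ℤ) : Matrix (Fin n) (Fin n) ℂ :=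
  if h : 1 ≤ p ∧ p ≤ (n : ℤ) ∧ 1 ≤ q ∧ q ≤ (n : ℤ) then
    Matrix.single ⟨(p - 1).toNat, by omega⟩ ⟨(q - 1).toNat, by omega⟩ 1
  else 0

/-- `B_{pq} = E_{pq} + E_{qp}` for `p < q`, `B_{pp} = E_{pp}`, and `0` otherwise. -/
noncomputable def Bmat (n : ℕ) (p q : ℤ) : Matrix (Fin n) (Fin n) ℂ :=
  if p < q then Eint n p q + Eint n q p else if p = q then Eint n p p else 0

/-- `C_{pq} = E_{pq} - E_{qp}` if `1 ≤ p < q ≤ n`, and `0` otherwise. -/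
noncomputable def Cmat (n : ℕ) (p q : ℤ) : Matrix (Fin n) (Fin n) ℂ :=
  if p < q then Eint n p q - Eint n q p else 0

/-- `ψ(B, C) = Σ_{i=1}^{n-1} (BC)_{i,i+1}`, the sum of the superdiagonal
entries of `B * C`. -/
noncomputable def psi (n : ℕ) (B C : Matrix (Fin n) (Fin n) ℂ) : ℂ :=
  ∑ i : Fin n, if h : (i : ℕ) + 1 < n then (B * C) i ⟨(i : ℕ) + 1, h⟩ else 0

lemma Eint_apply (n : ℕ) (p q : ℤ) (i j : Fin n) :
    Eint n p q i j = if p = (i : ℤ) + 1 ∧ q = (j : ℤ) + 1 then 1 else 0 := by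
  unfold Eint
  split_ifs with h h' h'
  · simp only [Matrix.single, Matrix.of_apply]
    rw [if_pos]
    refine ⟨Fin.ext ?_, Fin.ext ?_⟩ <;> simp <;> omega
  · simp only [Matrix.single, Matrix.of_apply]
    rw [if_neg]
    rintro ⟨h1, h2⟩
    apply h'
    have e1 : ((p-1).toNat : ℕ) = (i : ℕ) := congrArg Fin.val h1
    have e2 : ((q-1).toNat : ℕ) = (j : ℕ) := congrArg Fin.val h2
    constructor <;> omega
  · exfalso; apply h
    have := i.isLt; have := j.isLt
    omega
  · rfl

lemma fin_sum_delta (n : ℕ) (t : ℤ) (P : Prop) [Decidable P] :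
    (∑ m : Fin n, if ((m : ℤ) = t ∧ P) then (1 : ℂ) else 0)
      = if (0 ≤ t ∧ t < (n : ℤ) ∧ P) then 1 else 0 := by
  by_cases hP : P
  · by_cases ht : 0 ≤ t ∧ t < (n : ℤ)
    · rw [if_pos ⟨ht.1, ht.2, hP⟩]
      rw [Finset.sum_eq_single (⟨t.toNat, by omega⟩ : Fin n)]
      · rw [if_pos ⟨by simp; omega, hP⟩]
      · intro m _ hm
        rw [if_neg]
        rintro ⟨hmt, -⟩
        exact hm (Fin.ext (show (m : ℕ) = t.toNat by omega))
      · intro hmem; exact absurd (Finset.mem_univ _) hmem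
    · rw [if_neg (by tauto)]
      apply Finset.sum_eq_zero
      intro m _
      rw [if_neg]
      rintro ⟨hmt, -⟩
      have := m.isLt
      omega
  · simp only [hP, and_false, false_and, and_false, if_false, if_neg (by tauto : ¬(0 ≤ t ∧ t < (n:ℤ) ∧ P))]
    simp

lemma psi_EE (n : ℕ) (p q r s : ℤ) :
    psi n (Eint n p q) (Eint n r s) =
      if q = r ∧ 1 ≤ q ∧ q ≤ (n : ℤ) ∧ s = p + 1 ∧ 1 ≤ p ∧ p < (n : ℤ) then 1 else 0 := by
  unfold psi
  have hmul : ∀ (i : Fin n) (h : (i : ℕ) + 1 < n),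
      (Eint n p q * Eint n r s) i ⟨(i : ℕ) + 1, h⟩ =
        if (p = (i : ℤ) + 1 ∧ q = r ∧ 1 ≤ q ∧ q ≤ (n : ℤ) ∧ s = (i : ℤ) + 2) then 1 else 0 := by
    intro i h
    rw [Matrix.mul_apply]
    have step : ∀ m : Fin n,
        Eint n p q i m * Eint n r s m ⟨(i : ℕ) + 1, h⟩ =
          if ((m : ℤ) = q - 1 ∧ (p = (i : ℤ) + 1 ∧ q = r ∧ 1 ≤ q ∧ q ≤ (n : ℤ) ∧ s = (i : ℤ) + 2)) then 1 else 0 := by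
      intro m
      rw [Eint_apply, Eint_apply]
      have hm := m.isLt
      simp only [Fin.val_mk]
      push_cast
      split_ifs with a b c a b <;> first | (exfalso; omega) | norm_num
    rw [Finset.sum_congr rfl (fun m _ => step m), fin_sum_delta]
    apply if_congr _ rfl rfl
    have hi := i.isLt
    constructor
    · rintro ⟨h1, h2, h3⟩; tauto
    · rintro ⟨h1, h2, h3, h4, h5⟩
      refine ⟨by omega, by omega, h1, h2, h3, h4, h5⟩
  have step2 : ∀ i : Fin n,
      (if h : (i : ℕ) + 1 < n then (Eint n p q * Eint n r s) i ⟨(i : ℕ) + 1, h⟩ else 0)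
        = if ((i : ℤ) = p - 1 ∧ (q = r ∧ 1 ≤ q ∧ q ≤ (n : ℤ) ∧ s = p + 1 ∧ 1 ≤ p ∧ p < (n : ℤ))) then 1 else 0 := by
    intro i
    have hi := i.isLt
    by_cases h : (i : ℕ) + 1 < n
    · rw [dif_pos h, hmul i h]
      apply if_congr _ rfl rfl
      constructor
      · rintro ⟨h1, h2, h3, h4, h5⟩
        refine ⟨by omega, h2, h3, h4, by omega, by omega, by omega⟩
      · rintro ⟨h1, h2, h3, h4, h5, h6, h7⟩
        refine ⟨by omega, h2, h3, h4, by omega⟩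
    · rw [dif_neg h, if_neg]
      rintro ⟨h1, -, -, -, -, -, h7⟩
      omega
  rw [Finset.sum_congr rfl (fun i _ => step2 i), fin_sum_delta]
  apply if_congr _ rfl rfl
  constructor
  · rintro ⟨-, -, h⟩; exact h
  · rintro ⟨h1, h2, h3, h4, h5, h6⟩
    exact ⟨by omega, by omega, h1, h2, h3, h4, h5, h6⟩

lemma psi_add_left (n : ℕ) (A B C : Matrix (Fin n) (Fin n) ℂ) :
    psi n (A + B) C = psi n A C + psi n B C := by
  unfold psi
  rw [← Finset.sum_add_distrib]
  refine Finset.sum_congr rfl fun i _ => ?_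
  by_cases h : (i : ℕ) + 1 < n <;> simp [h, add_mul]

lemma psi_sub_right (n : ℕ) (A B C : Matrix (Fin n) (Fin n) ℂ) :
    psi n A (B - C) = psi n A B - psi n A C := by
  unfold psi
  rw [← Finset.sum_sub_distrib]
  refine Finset.sum_congr rfl fun i _ => ?_
  by_cases h : (i : ℕ) + 1 < n <;> simp [h, mul_sub]

lemma psi_zero_left (n : ℕ) (C : Matrix (Fin n) (Fin n) ℂ) : psi n 0 C = 0 := by
  unfold psi
  apply Finset.sum_eq_zero
  intro i _
  by_cases h : (i : ℕ) + 1 < n <;> simp [h]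

/-- `Σ_{k=0}^{n} ψ(B_{c+k, d-k-1}, C_{cd}) = 1` (equation (5.7)). -/
theorem zeta_y_ybar (n c d : ℕ) (h1 : 1 ≤ c) (h2 : c < d) (h3 : d ≤ n) :
    ∑ k ∈ Finset.range (n + 1),
      psi n (Bmat n ((c : ℤ) + k) ((d : ℤ) - k - 1)) (Cmat n c d) = 1 := by
  have hC : Cmat n (c : ℤ) (d : ℤ) = Eint n c d - Eint n d c := by
    unfold Cmat; rw [if_pos (by exact_mod_cast h2)]
  have key : ∀ k ∈ Finset.range (n + 1),
      psi n (Bmat n ((c : ℤ) + k) ((d : ℤ) - k - 1)) (Cmat n c d)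
        = if k = 0 then 1 else 0 := by
    intro k _
    rw [hC]
    rcases lt_trichotomy ((c : ℤ) + k) ((d : ℤ) - k - 1) with hlt | heq | hgt
    · rw [Bmat, if_pos hlt, psi_add_left, psi_sub_right, psi_sub_right,
        psi_EE, psi_EE, psi_EE, psi_EE]
      split_ifs <;> first | (exfalso; omega) | norm_num
    · rw [Bmat, if_neg (by omega), if_pos heq, psi_sub_right, psi_EE, psi_EE]
      split_ifs <;> first | (exfalso; omega) | norm_num
    · rw [Bmat, if_neg (by omega), if_neg (by omega), psi_zero_left]
      split_ifs with hk
      · exfalso; omega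
      · rfl
  rw [Finset.sum_congr rfl key, Finset.sum_ite_eq' (Finset.range (n + 1)) 0 (fun _ => (1 : ℂ))]
  simp
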